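/- If in addition k(x, x) ≤ 1 for every x ∈ X, then the cumulative regularized posterior variance is bounded by the information gain: Σ_{s=1}^t σ_{s−1}²(x_s) ≤ (1 + 2λ) · (1/2) · log det(I_t + λ⁻¹ K_t). -/

import Mathlib

open Matrix

/-- Gram matrix of the first `s` points `xs 0, …, xs (s-1)`. -/
noncomputable def gram {X : Type*} (k : X → X → ℝ) (xs : ℕ → X) (s : ℕ) :
    Matrix (Fin s) (Fin s) ℝ :=
  Matrix.of fun i j => k (xs i) (xs j)

/-- Kernel vector `k_s(x) = (k(x_1,x), …, k(x_s,x))`. -/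
noncomputable def kvec {X : Type*} (k : X → X → ℝ) (xs : ℕ → X) (s : ℕ) (x : X) :
    Fin s → ℝ :=
  fun i => k (xs i) x

/-- Regularized posterior covariance
`σ_s(x,x') = k(x,x') − k_s(x)ᵀ (K_s + λ I_s)⁻¹ k_s(x')`. -/
noncomputable def postCov {X : Type*} (k : X → X → ℝ) (xs : ℕ → X) (lam : ℝ) (s : ℕ)
    (x x' : X) : ℝ :=
  k x x' -
    kvec k xs s x ⬝ᵥ ((gram k xs s + lam • (1 : Matrix (Fin s) (Fin s) ℝ))⁻¹ *ᵥ kvec k xs s x')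

/-- Regularized posterior variance `σ_s²(x) = σ_s(x,x)`. -/
noncomputable def postVar {X : Type*} (k : X → X → ℝ) (xs : ℕ → X) (lam : ℝ) (s : ℕ)
    (x : X) : ℝ :=
  postCov k xs lam s x x

/-! ### Auxiliary lemmas -/

/-- Padé-type lower bound for the logarithm: `2z/(2+z) ≤ log (1+z)` for `z ≥ 0`. -/
lemma aux_pade_log {z : ℝ} (hz : 0 ≤ z) : 2 * z / (2 + z) ≤ Real.log (1 + z) := by
  set f : ℝ → ℝ := fun x => Real.log (1 + x) - 2 * x / (2 + x) with hf
  have hmono : MonotoneOn f (Set.Ici (0 : ℝ)) := by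
    apply monotoneOn_of_hasDerivWithinAt_nonneg
      (f' := fun x => 1 / (1 + x) - 4 / (2 + x) ^ 2) (convex_Ici 0)
    · apply ContinuousOn.sub
      · apply ContinuousOn.log
        · exact (continuous_const.add continuous_id).continuousOn
        · intro x hx
          have hx0 : (0:ℝ) ≤ x := hx
          exact (show (0:ℝ) < 1 + x by linarith).ne'
      · apply ContinuousOn.div
        · exact (continuous_const.mul continuous_id).continuousOn
        · exact (continuous_const.add continuous_id).continuousOn
        · intro x hx
          have hx0 : (0:ℝ) ≤ x := hx
          exact (show (0:ℝ) < 2 + x by linarith).ne'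
    · intro x hx
      rw [interior_Ici] at hx
      have hx0 : (0:ℝ) < x := hx
      have h1 : HasDerivAt (fun y : ℝ => Real.log (1 + y)) (1 / (1 + x)) x := by
        have hid : HasDerivAt (fun y : ℝ => 1 + y) 1 x := (hasDerivAt_id x).const_add 1
        simpa using hid.log (by linarith)
      have h2 : HasDerivAt (fun y : ℝ => 2 * y / (2 + y)) (4 / (2 + x) ^ 2) x := by
        have h := ((hasDerivAt_id x).const_mul 2).div ((hasDerivAt_id x).const_add 2)
          (show 2 + id x ≠ 0 from (show (0:ℝ) < 2 + id x by simp only [id_eq]; linarith).ne')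
        simp only [id_eq] at h
        have h2x : (2 + x) ≠ 0 := by linarith
        exact h.congr_deriv (by ring)
      exact ((h1.sub h2).hasDerivWithinAt)
    · intro x hx
      rw [interior_Ici] at hx
      have hx0 : (0:ℝ) < x := hx
      have h1 : (0:ℝ) < 1 + x := by linarith
      have h2 : (0:ℝ) < 2 + x := by linarith
      rw [sub_nonneg, div_le_div_iff₀ (by positivity) h1]
      nlinarith [sq_nonneg x]
  have h0 : f 0 ≤ f z := hmono (by simp) (by simpa using hz) hz
  have hf0 : f 0 = 0 := by simp [hf]
  rw [hf0] at h0
  simpa [hf, sub_nonneg] using h0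

/-- Scalar per-step bound: if `0 ≤ u ≤ 1` then `u ≤ (1+2λ)·(1/2)·log(1+u/λ)`. -/
lemma aux_term_bound {lam u : ℝ} (hlam : 0 < lam) (h0 : 0 ≤ u) (h1 : u ≤ 1) :
    u ≤ (1 + 2 * lam) * ((1 / 2) * Real.log (1 + lam⁻¹ * u)) := by
  have hz : 0 ≤ u / lam := div_nonneg h0 hlam.le
  have hp := aux_pade_log hz
  have hden : (0:ℝ) < 2 * lam + u := by linarith
  have hd2 : (0:ℝ) < 2 + u / lam := by positivity
  have heq : 2 * (u / lam) / (2 + u / lam) = 2 * u / (2 * lam + u) := by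
    rw [div_eq_div_iff hd2.ne' hden.ne']
    field_simp
  rw [heq] at hp
  have hiu : lam⁻¹ * u = u / lam := by rw [inv_mul_eq_div]
  rw [hiu]
  calc u ≤ (1 + 2 * lam) * ((1 / 2) * (2 * u / (2 * lam + u))) := by
        have he : (1 + 2 * lam) * ((1 / 2) * (2 * u / (2 * lam + u)))
            = ((1 + 2 * lam) * u) / (2 * lam + u) := by
          field_simp
        rw [he, le_div_iff₀ hden]
        nlinarith
    _ ≤ (1 + 2 * lam) * ((1 / 2) * Real.log (1 + u / lam)) := by
        have hpos : (0:ℝ) ≤ 1 + 2 * lam := by linarith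
        gcongr

section kernelAux

variable {X : Type*} (k : X → X → ℝ) (xs : ℕ → X) (lam : ℝ)

lemma aux_gram_psd
    (hpsd : ∀ (n : ℕ) (y : Fin n → X), (Matrix.of fun i j => k (y i) (y j)).PosSemidef)
    (s : ℕ) : (gram k xs s).PosSemidef :=
  hpsd s fun i => xs i

lemma aux_A_posDef
    (hpsd : ∀ (n : ℕ) (y : Fin n → X), (Matrix.of fun i j => k (y i) (y j)).PosSemidef)
    (hlam : 0 < lam) (s : ℕ) :
    (gram k xs s + lam • (1 : Matrix (Fin s) (Fin s) ℝ)).PosDef := by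
  have h1 : (lam • (1 : Matrix (Fin s) (Fin s) ℝ)).PosDef := by
    rw [Matrix.smul_one_eq_diagonal]
    exact Matrix.PosDef.diagonal fun i => hlam
  exact Matrix.PosDef.posSemidef_add (aux_gram_psd k xs hpsd s) h1

lemma aux_quad_nonneg {n : ℕ} {M : Matrix (Fin n) (Fin n) ℝ} (h : M.PosSemidef)
    (x : Fin n → ℝ) : 0 ≤ x ⬝ᵥ (M *ᵥ x) := by
  simpa using h.dotProduct_mulVec_nonneg x

lemma aux_quad_expand (hsymm : ∀ x y, k x y = k y x) (s : ℕ) (u : Fin s → ℝ) :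
    (Fin.snoc u 1 : Fin (s+1) → ℝ) ⬝ᵥ (gram k xs (s+1) *ᵥ (Fin.snoc u 1 : Fin (s+1) → ℝ))
      = u ⬝ᵥ (gram k xs s *ᵥ u) + 2 * (u ⬝ᵥ kvec k xs s (xs s)) + k (xs s) (xs s) := by
  simp only [dotProduct, Matrix.mulVec, Fin.sum_univ_castSucc, Fin.snoc_castSucc, Fin.snoc_last,
    _root_.gram, kvec, Matrix.of_apply, Fin.coe_castSucc, Fin.val_last, mul_one, one_mul]
  have hrow : (∑ x : Fin s, k (xs s) (xs (x:ℕ)) * u x) = ∑ x : Fin s, u x * k (xs (x:ℕ)) (xs s) :=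
    Finset.sum_congr rfl fun j _ => by rw [hsymm]; ring
  have hsplit : (∑ x : Fin s, u x * ((∑ x1 : Fin s, k (xs (x:ℕ)) (xs (x1:ℕ)) * u x1) + k (xs (x:ℕ)) (xs s)))
      = (∑ x : Fin s, u x * ∑ x1 : Fin s, k (xs (x:ℕ)) (xs (x1:ℕ)) * u x1)
        + ∑ x : Fin s, u x * k (xs (x:ℕ)) (xs s) := by
    rw [← Finset.sum_add_distrib]
    exact Finset.sum_congr rfl fun i _ => by ring
  rw [hrow, hsplit]
  ring

lemma aux_postVar_nonneg (hsymm : ∀ x y, k x y = k y x)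
    (hpsd : ∀ (n : ℕ) (y : Fin n → X), (Matrix.of fun i j => k (y i) (y j)).PosSemidef)
    (hlam : 0 < lam) (s : ℕ) : 0 ≤ postVar k xs lam s (xs s) := by
  set A := gram k xs s + lam • (1 : Matrix (Fin s) (Fin s) ℝ) with hA
  have hApd : A.PosDef := aux_A_posDef k xs lam hpsd hlam s
  have hdet : IsUnit A.det := isUnit_iff_ne_zero.mpr hApd.det_pos.ne'
  set v := kvec k xs s (xs s) with hv
  set p := A⁻¹ *ᵥ v with hp
  have hAp : A *ᵥ p = v := by
    rw [hp, Matrix.mulVec_mulVec, Matrix.mul_nonsing_inv _ hdet, Matrix.one_mulVec]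
  have hq : 0 ≤ (Fin.snoc (-p) 1 : Fin (s+1) → ℝ) ⬝ᵥ
      (gram k xs (s+1) *ᵥ (Fin.snoc (-p) 1 : Fin (s+1) → ℝ)) :=
    aux_quad_nonneg (hpsd (s+1) fun i => xs i) _
  rw [aux_quad_expand k xs hsymm s (-p)] at hq
  have hG : gram k xs s *ᵥ p = v - lam • p := by
    have hGA : gram k xs s = A - lam • (1 : Matrix (Fin s) (Fin s) ℝ) := by
      rw [hA, add_sub_cancel_right]
    rw [hGA, Matrix.sub_mulVec, hAp, Matrix.smul_mulVec, Matrix.one_mulVec]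
  have h1 : (-p) ⬝ᵥ (gram k xs s *ᵥ (-p)) = p ⬝ᵥ v - lam * (p ⬝ᵥ p) := by
    rw [Matrix.mulVec_neg, hG]
    simp only [dotProduct_neg, neg_dotProduct, dotProduct_sub, dotProduct_smul, smul_eq_mul,
      neg_neg, neg_sub]
    ring
  have h2 : (-p) ⬝ᵥ v = -(p ⬝ᵥ v) := by simp [neg_dotProduct]
  rw [h1, h2] at hq
  have hpp : 0 ≤ p ⬝ᵥ p := Finset.sum_nonneg fun i _ => mul_self_nonneg (p i)
  have hform : postVar k xs lam s (xs s) = k (xs s) (xs s) - v ⬝ᵥ p := rfl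
  rw [hform, dotProduct_comm v p]
  nlinarith [mul_nonneg hlam.le hpp]

lemma aux_postVar_le_one
    (hpsd : ∀ (n : ℕ) (y : Fin n → X), (Matrix.of fun i j => k (y i) (y j)).PosSemidef)
    (hbdd : ∀ x, k x x ≤ 1) (hlam : 0 < lam) (s : ℕ) :
    postVar k xs lam s (xs s) ≤ 1 := by
  set A := gram k xs s + lam • (1 : Matrix (Fin s) (Fin s) ℝ) with hA
  have hApd : A.PosDef := aux_A_posDef k xs lam hpsd hlam s
  set v := kvec k xs s (xs s) with hv
  have hq : 0 ≤ v ⬝ᵥ (A⁻¹ *ᵥ v) := aux_quad_nonneg hApd.inv.posSemidef v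
  have hform : postVar k xs lam s (xs s) = k (xs s) (xs s) - v ⬝ᵥ (A⁻¹ *ᵥ v) := rfl
  rw [hform]
  linarith [hbdd (xs s)]

lemma aux_det_succ (hsymm : ∀ x y, k x y = k y x)
    (hpsd : ∀ (n : ℕ) (y : Fin n → X), (Matrix.of fun i j => k (y i) (y j)).PosSemidef)
    (hlam : 0 < lam) (s : ℕ) :
    (gram k xs (s+1) + lam • (1 : Matrix (Fin (s+1)) (Fin (s+1)) ℝ)).det
      = (gram k xs s + lam • (1 : Matrix (Fin s) (Fin s) ℝ)).det
          * (lam + postVar k xs lam s (xs s)) := by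
  set A := gram k xs s + lam • (1 : Matrix (Fin s) (Fin s) ℝ) with hA
  set v := kvec k xs s (xs s) with hv
  have hApd : A.PosDef := aux_A_posDef k xs lam hpsd hlam s
  have hdet : IsUnit A.det := isUnit_iff_ne_zero.mpr hApd.det_pos.ne'
  haveI : Invertible A := A.invertibleOfIsUnitDet hdet
  set B : Matrix (Fin s) (Fin 1) ℝ := Matrix.of fun i _ => v i with hB
  set C : Matrix (Fin 1) (Fin s) ℝ := Matrix.of fun _ j => v j with hC
  set D : Matrix (Fin 1) (Fin 1) ℝ := Matrix.of fun _ _ => k (xs s) (xs s) + lam with hD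
  have hentry : ∀ p q : Fin s ⊕ Fin 1,
      Matrix.fromBlocks A B C D p q
        = (gram k xs (s+1) + lam • (1 : Matrix (Fin (s+1)) (Fin (s+1)) ℝ))
            (finSumFinEquiv p) (finSumFinEquiv q) := by
    rintro (i | i) (j | j)
    · simp only [Matrix.fromBlocks_apply₁₁, hA, finSumFinEquiv_apply_left, Matrix.add_apply,
        Matrix.smul_apply, Matrix.one_apply, smul_eq_mul, _root_.gram, Matrix.of_apply,
        Fin.coe_castAdd]
      congr 1
      by_cases h : i = j
      · simp [h]
      · have h' : Fin.castAdd 1 i ≠ Fin.castAdd 1 j := by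
          simp only [ne_eq, Fin.ext_iff, Fin.coe_castAdd]
          exact fun hc => h (Fin.ext hc)
        simp [h, h']
    · have hj : (j : ℕ) = 0 := by omega
      have hne : Fin.castAdd 1 i ≠ Fin.natAdd s j := by
        simp only [ne_eq, Fin.ext_iff, Fin.coe_castAdd, Fin.coe_natAdd]
        omega
      simp only [Matrix.fromBlocks_apply₁₂, hB, Matrix.of_apply, hv, kvec,
        finSumFinEquiv_apply_left, finSumFinEquiv_apply_right, Matrix.add_apply,
        Matrix.smul_apply, Matrix.one_apply, smul_eq_mul, _root_.gram, Fin.coe_castAdd,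
        Fin.coe_natAdd, hj, hne, if_false, mul_zero, add_zero, Nat.add_zero]
    · have hj : (i : ℕ) = 0 := by omega
      have hne : Fin.natAdd s i ≠ Fin.castAdd 1 j := by
        simp only [ne_eq, Fin.ext_iff, Fin.coe_castAdd, Fin.coe_natAdd]
        omega
      simp only [Matrix.fromBlocks_apply₂₁, hC, Matrix.of_apply, hv, kvec,
        finSumFinEquiv_apply_left, finSumFinEquiv_apply_right, Matrix.add_apply,
        Matrix.smul_apply, Matrix.one_apply, smul_eq_mul, _root_.gram, Fin.coe_castAdd,
        Fin.coe_natAdd, hj, hne, if_false, mul_zero, add_zero, Nat.add_zero]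
      exact hsymm _ _
    · have hi : (i : ℕ) = 0 := by omega
      have hj : (j : ℕ) = 0 := by omega
      have hij : i = j := by
        apply Fin.ext; omega
      simp only [Matrix.fromBlocks_apply₂₂, hD, Matrix.of_apply,
        finSumFinEquiv_apply_right, Matrix.add_apply, Matrix.smul_apply, Matrix.one_apply,
        smul_eq_mul, _root_.gram, Fin.coe_natAdd, hi, hj, hij, if_true, mul_one, Nat.add_zero]
  have hblock : gram k xs (s+1) + lam • (1 : Matrix (Fin (s+1)) (Fin (s+1)) ℝ)
      = (Matrix.fromBlocks A B C D).submatrix finSumFinEquiv.symm finSumFinEquiv.symm := by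
    ext i j
    rw [Matrix.submatrix_apply, hentry, Equiv.apply_symm_apply, Equiv.apply_symm_apply]
  rw [hblock, Matrix.det_submatrix_equiv_self, Matrix.det_fromBlocks₁₁]
  congr 1
  rw [Matrix.det_fin_one, Matrix.invOf_eq_nonsing_inv]
  have hCAB : (C * A⁻¹ * B) 0 0 = v ⬝ᵥ (A⁻¹ *ᵥ v) := by
    simp only [Matrix.mul_apply, hB, hC, Matrix.of_apply, dotProduct, Matrix.mulVec,
      Finset.sum_mul, Finset.mul_sum]
    rw [Finset.sum_comm]
    exact Finset.sum_congr rfl fun i _ => Finset.sum_congr rfl fun j _ => by ring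
  rw [Matrix.sub_apply, hCAB]
  have hform : postVar k xs lam s (xs s) = k (xs s) (xs s) - v ⬝ᵥ (A⁻¹ *ᵥ v) := rfl
  rw [hform, hD]
  simp only [Matrix.of_apply]
  ring

lemma aux_det_prod (hsymm : ∀ x y, k x y = k y x)
    (hpsd : ∀ (n : ℕ) (y : Fin n → X), (Matrix.of fun i j => k (y i) (y j)).PosSemidef)
    (hlam : 0 < lam) (t : ℕ) :
    (gram k xs t + lam • (1 : Matrix (Fin t) (Fin t) ℝ)).det
      = lam ^ t * ∏ s ∈ Finset.range t, (1 + lam⁻¹ * postVar k xs lam s (xs s)) := by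
  induction t with
  | zero => simp
  | succ n ih =>
      rw [aux_det_succ k xs lam hsymm hpsd hlam n, ih, Finset.prod_range_succ, pow_succ]
      field_simp

lemma aux_det_eq (hsymm : ∀ x y, k x y = k y x)
    (hpsd : ∀ (n : ℕ) (y : Fin n → X), (Matrix.of fun i j => k (y i) (y j)).PosSemidef)
    (hlam : 0 < lam) (t : ℕ) :
    (1 + lam⁻¹ • gram k xs t).det
      = ∏ s ∈ Finset.range t, (1 + lam⁻¹ * postVar k xs lam s (xs s)) := by
  have hsm : gram k xs t + lam • (1 : Matrix (Fin t) (Fin t) ℝ)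
      = lam • (1 + lam⁻¹ • gram k xs t) := by
    rw [smul_add, smul_smul, mul_inv_cancel₀ hlam.ne', one_smul, add_comm]
  have hdet := aux_det_prod k xs lam hsymm hpsd hlam t
  rw [hsm, Matrix.det_smul] at hdet
  simp only [Fintype.card_fin] at hdet
  exact mul_left_cancel₀ (pow_ne_zero t hlam.ne') hdet

end kernelAux

theorem sum_postVar_le_infoGain {X : Type*} (k : X → X → ℝ)
    (hsymm : ∀ x y, k x y = k y x)
    (hpsd : ∀ (n : ℕ) (y : Fin n → X), (Matrix.of fun i j => k (y i) (y j)).PosSemidef)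
    (hbdd : ∀ x, k x x ≤ 1)
    (lam : ℝ) (hlam : 0 < lam)
    (t : ℕ) (xs : ℕ → X) :
    ∑ s ∈ Finset.range t, postVar k xs lam s (xs s)
      ≤ (1 + 2 * lam) * ((1 / 2) * Real.log ((1 + lam⁻¹ • gram k xs t).det)) := by
  have hnn : ∀ s, 0 ≤ postVar k xs lam s (xs s) :=
    fun s => aux_postVar_nonneg k xs lam hsymm hpsd hlam s
  have hne : ∀ s ∈ Finset.range t, (1 + lam⁻¹ * postVar k xs lam s (xs s)) ≠ 0 := by
    intro s _
    have := mul_nonneg (inv_pos.mpr hlam).le (hnn s)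
    linarith
  rw [aux_det_eq k xs lam hsymm hpsd hlam t, Real.log_prod hne]
  simp_rw [Finset.mul_sum]
  apply Finset.sum_le_sum
  intro s _
  exact aux_term_bound hlam (hnn s) (aux_postVar_le_one k xs lam hpsd hbdd hlam s)
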